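/- Let D ∈ GL(d, ℝ) and C ∈ ℝ^{d×d} with D C^T = C D^T, and let Q = (I + D D^T + C D^T (I + D D^T)^{-1} D C^T)^{-1}. Define the symmetric 2d×2d matrix M = [[I - Q, -Q D], [-D^T Q, I - D^T Q D]]. Then (x, y) ∈ ker(M) if and only if x ∈ ker(C^T) and y = D^T x. -/

import Mathlib

open Matrix

theorem ker_M_eq_graph (d : ℕ)
    (C D : Matrix (Fin d) (Fin d) ℝ)
    (hD : IsUnit D) (hCD : D * Cᵀ = C * Dᵀ)
    (Q : Matrix (Fin d) (Fin d) ℝ)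
    (hQ : Q = (1 + D * Dᵀ + C * Dᵀ * (1 + D * Dᵀ)⁻¹ * D * Cᵀ)⁻¹)
    (M : Matrix (Fin d ⊕ Fin d) (Fin d ⊕ Fin d) ℝ)
    (hM : M = Matrix.fromBlocks (1 - Q) (-(Q * D)) (-(Dᵀ * Q)) (1 - Dᵀ * Q * D))
    (x y : Fin d → ℝ) :
    M.mulVec (Sum.elim x y) = 0 ↔ (Cᵀ.mulVec x = 0 ∧ y = Dᵀ.mulVec x) := by
  set S : Matrix (Fin d) (Fin d) ℝ := 1 + D * Dᵀ with hS
  set K : Matrix (Fin d) (Fin d) ℝ := D * Cᵀ with hKdef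
  have hKsymm : Kᵀ = K := by
    rw [hKdef, transpose_mul, transpose_transpose, ← hCD]
  have hSpd : S.PosDef := by
    rw [hS]
    exact Matrix.PosDef.add_posSemidef Matrix.PosDef.one
      (Matrix.posSemidef_self_mul_conjTranspose D)
  have hSinvpd : S⁻¹.PosDef := hSpd.inv
  have hKSK : (K * S⁻¹ * K).PosSemidef := by
    have := hSinvpd.posSemidef.mul_mul_conjTranspose_same K
    rwa [show Kᴴ = K from hKsymm] at this
  set R : Matrix (Fin d) (Fin d) ℝ := S + K * S⁻¹ * K with hR
  have hRpd : R.PosDef := Matrix.PosDef.add_posSemidef hSpd hKSK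
  have hRunit : IsUnit R.det := (Matrix.isUnit_iff_isUnit_det R).mp hRpd.isUnit
  have hQR : Q = R⁻¹ := by
    rw [hQ, hR]
    congr 1
    rw [← hCD]
    simp only [hKdef, Matrix.mul_assoc]
  have hRQ : R * Q = 1 := by rw [hQR]; exact Matrix.mul_nonsing_inv R hRunit
  have hQRone : Q * R = 1 := by rw [hQR]; exact Matrix.nonsing_inv_mul R hRunit
  have hDinj : Function.Injective (D.mulVec) := Matrix.mulVec_injective_iff_isUnit.mpr hD
  rw [hM, Matrix.fromBlocks_mulVec]
  simp only [Sum.elim_comp_inl, Sum.elim_comp_inr]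
  have hsum : ∀ f g : Fin d → ℝ, (Sum.elim f g = (0 : Fin d ⊕ Fin d → ℝ) ↔ f = 0 ∧ g = 0) := by
    intro f g
    constructor
    · intro h
      exact ⟨funext fun i => congrFun h (Sum.inl i), funext fun i => congrFun h (Sum.inr i)⟩
    · rintro ⟨hf, hg⟩; rw [hf, hg]; funext i; cases i <;> rfl
  rw [hsum]
  set z : Fin d → ℝ := Q *ᵥ (x + D *ᵥ y) with hz
  have lhs1 : (1 - Q) *ᵥ x + (-(Q * D)) *ᵥ y = x - z := by
    rw [hz, sub_mulVec, one_mulVec, neg_mulVec, mulVec_add, ← mulVec_mulVec]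
    abel
  have lhs2 : (-(Dᵀ * Q)) *ᵥ x + (1 - Dᵀ * Q * D) *ᵥ y = y - Dᵀ *ᵥ z := by
    rw [hz, sub_mulVec, one_mulVec, neg_mulVec, mulVec_add, ← mulVec_mulVec,
      ← mulVec_mulVec, ← mulVec_mulVec, mulVec_add]
    abel
  rw [lhs1, lhs2, sub_eq_zero, sub_eq_zero]
  constructor
  · rintro ⟨h1, h2⟩
    -- h1 : x = z, h2 : y = Dᵀ *ᵥ z
    have hyx : y = Dᵀ *ᵥ x := by rw [h2, h1]
    have hsx : x + D *ᵥ y = S *ᵥ x := by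
      rw [hyx, hS, add_mulVec, one_mulVec, ← Matrix.mulVec_mulVec]
    have hx : x = Q *ᵥ (S *ᵥ x) := by
      calc x = z := h1
        _ = Q *ᵥ (S *ᵥ x) := by rw [hz, hsx]
    have hRx : R *ᵥ x = S *ᵥ x := by
      calc R *ᵥ x = R *ᵥ (Q *ᵥ (S *ᵥ x)) := by rw [← hx]
        _ = (R * Q) *ᵥ (S *ᵥ x) := by rw [mulVec_mulVec]
        _ = S *ᵥ x := by rw [hRQ, one_mulVec]
    have hKSKx : (K * S⁻¹ * K) *ᵥ x = 0 := by
      have h' : S *ᵥ x + (K * S⁻¹ * K) *ᵥ x = S *ᵥ x := by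
        rw [← add_mulVec, ← hR, hRx]
      exact add_eq_left.mp h'
    have hKx : K *ᵥ x = 0 := by
      by_contra hne
      have hpos : 0 < star (K *ᵥ x) ⬝ᵥ (S⁻¹ *ᵥ (K *ᵥ x)) := hSinvpd.dotProduct_mulVec_pos hne
      have hzero : x ⬝ᵥ ((K * S⁻¹ * K) *ᵥ x) = 0 := by rw [hKSKx, dotProduct_zero]
      have : x ⬝ᵥ ((K * S⁻¹ * K) *ᵥ x) = (K *ᵥ x) ⬝ᵥ (S⁻¹ *ᵥ (K *ᵥ x)) := by
        rw [← mulVec_mulVec, ← mulVec_mulVec, Matrix.dotProduct_mulVec x K,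
          ← Matrix.mulVec_transpose, hKsymm]
      rw [this] at hzero
      rw [show star (K *ᵥ x) = K *ᵥ x from rfl] at hpos
      linarith
    have hCx : Cᵀ *ᵥ x = 0 := by
      apply hDinj
      rw [mulVec_mulVec, ← hKdef, hKx, mulVec_zero]
    exact ⟨hCx, hyx⟩
  · rintro ⟨hCx, hyx⟩
    have hKx : K *ᵥ x = 0 := by rw [hKdef, ← mulVec_mulVec, hCx, mulVec_zero]
    have hSx : x + D *ᵥ y = S *ᵥ x := by
      rw [hyx, hS, add_mulVec, one_mulVec, mulVec_mulVec]
    have hz' : z = x := by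
      rw [hz, hSx]
      have h0 : (K * S⁻¹ * K) *ᵥ x = 0 := by
        rw [← Matrix.mulVec_mulVec, hKx, mulVec_zero]
      have : S *ᵥ x = R *ᵥ x := by
        conv_rhs => rw [hR, add_mulVec, h0]
        rw [add_zero]
      rw [this, mulVec_mulVec, hQRone, one_mulVec]
    exact ⟨hz'.symm, by rw [hz', hyx]⟩
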